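/- Let M be an even natural number and let A₁ and A₂ be adjacency matrices of simple graphs on M vertices (real symmetric M×M matrices with zero diagonal and entries in {0,1}) having equal characteristic polynomials (isospectral). Then the two graphs are isomorphic, i.e. there exists a permutation σ of Fin M with A₁ i j = A₂ (σ i) (σ j) for all i, j, if and only if for every n : Fin M → ℕ the symmetrized sums agree: ∑_{σ ∈ Perm(Fin M)} haf(A₁ ⊘ J_{n ∘ σ}) = ∑_{σ ∈ Perm(Fin M)} haf(A₂ ⊘ J_{n ∘ σ}). -/

import Mathlib

open scoped Classical in
/-- The hafnian of a matrix: the sum over all partitions of the index type into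
unordered pairs (perfect matchings) of the products of the corresponding entries.
For a symmetric matrix `B` the term `(∑ u ∈ p, ∑ v ∈ p.erase u, B u v) / 2`
equals `B u v` for the pair `p = {u, v}`. -/
noncomputable def hafnian {ι : Type*} [Fintype ι] [DecidableEq ι]
    (B : Matrix ι ι ℝ) : ℝ :=
  ∑ Mch ∈ Finset.univ.filter
      (fun Mch : Finset (Finset ι) =>
        (∀ p ∈ Mch, p.card = 2) ∧ ∀ x : ι, ∃! p, p ∈ Mch ∧ x ∈ p),
    ∏ p ∈ Mch, (∑ u ∈ p, ∑ v ∈ p.erase u, B u v) / 2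

/-- The reduced Kronecker product `A ⊘ J_n`, indexed by `Σ i, Fin (n i)`,
whose `((i,a),(j,b))` entry is `A i j`. -/
def rkron {ι : Type*} (A : Matrix ι ι ℝ) (n : ι → ℕ) :
    Matrix ((i : ι) × Fin (n i)) ((i : ι) × Fin (n i)) ℝ :=
  fun x y => A x.1 y.1

open Finset

section Matching

open scoped Classical

variable {ι : Type*} [Fintype ι] [DecidableEq ι]

noncomputable def pairVal (B : Matrix ι ι ℝ) (p : Finset ι) : ℝ :=
  (∑ u ∈ p, ∑ v ∈ p.erase u, B u v) / 2

def IsPM (Mch : Finset (Finset ι)) : Prop :=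
  (∀ p ∈ Mch, p.card = 2) ∧ ∀ x : ι, ∃! p, p ∈ Mch ∧ x ∈ p

set_option linter.unusedSectionVars false

lemma hafnian_eq (B : Matrix ι ι ℝ) :
    hafnian B = ∑ Mch ∈ Finset.univ.filter (fun Mch : Finset (Finset ι) => IsPM Mch),
      ∏ p ∈ Mch, pairVal B p := by
  unfold hafnian
  apply Finset.sum_congr
  · ext Mch
    simp only [Finset.mem_filter, Finset.mem_univ, true_and]; rfl
  · intros; rfl

lemma pairVal_pair {B : Matrix ι ι ℝ} (hB : ∀ u v, B u v = B v u) {a b : ι} (hab : a ≠ b) :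
    pairVal B ({a, b} : Finset ι) = B a b := by
  have h1 : ({a, b} : Finset ι).erase a = {b} := by
    rw [show ({a,b} : Finset ι) = insert a {b} from rfl, Finset.erase_insert (by simp [hab])]
  have h2 : ({a, b} : Finset ι).erase b = {a} := by
    rw [show ({a,b} : Finset ι) = insert a {b} from rfl,
      Finset.erase_insert_of_ne hab]
    simp
  rw [pairVal, Finset.sum_insert (by simp [hab]), Finset.sum_singleton, h1, h2,
    Finset.sum_singleton, Finset.sum_singleton, hB b a]
  ring

lemma IsPM.two_mul_card {Mch : Finset (Finset ι)} (h : IsPM Mch) :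
    2 * Mch.card = Fintype.card ι := by
  have hdisj : ∀ p ∈ Mch, ∀ q ∈ Mch, p ≠ q → Disjoint p q := by
    intro p hp q hq hpq
    rw [Finset.disjoint_left]
    intro x hxp hxq
    obtain ⟨r, _, hr⟩ := h.2 x
    exact hpq ((hr p ⟨hp, hxp⟩).trans (hr q ⟨hq, hxq⟩).symm)
  have hcover : (Mch.biUnion fun x => x) = Finset.univ := by
    ext x
    simp only [Finset.mem_biUnion, Finset.mem_univ, iff_true]
    obtain ⟨p, hp, _⟩ := h.2 x
    exact ⟨p, hp.1, hp.2⟩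
  have := Finset.card_biUnion hdisj
  rw [hcover, Finset.card_univ] at this
  rw [this, Finset.sum_congr rfl (fun p hp => (h.1 p hp : p.card = 2)),
    Finset.sum_const, smul_eq_mul]
  ring

lemma IsPM.image {κ : Type*} [Fintype κ] [DecidableEq κ] (e : ι ≃ κ)
    {Mch : Finset (Finset ι)} (h : IsPM Mch) :
    IsPM (Mch.image (fun p => p.image e)) := by
  constructor
  · intro q hq
    obtain ⟨p, hp, rfl⟩ := Finset.mem_image.1 hq
    rw [Finset.card_image_of_injective _ e.injective]
    exact h.1 p hp
  · intro y
    obtain ⟨p, ⟨hp, hxp⟩, hu⟩ := h.2 (e.symm y)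
    refine ⟨p.image e, ⟨Finset.mem_image_of_mem _ hp, ?_⟩, ?_⟩
    · rw [Finset.mem_image]
      exact ⟨e.symm y, hxp, by simp⟩
    · rintro q ⟨hq, hyq⟩
      obtain ⟨r, hr, rfl⟩ := Finset.mem_image.1 hq
      have : e.symm y ∈ r := by
        rw [Finset.mem_image] at hyq
        obtain ⟨z, hz, hzy⟩ := hyq
        rwa [← hzy, Equiv.symm_apply_apply]
      rw [hu r ⟨hr, this⟩]

lemma image_image_cancel {κ : Type*} [DecidableEq κ] (e : ι ≃ κ) (Mch : Finset (Finset ι)) :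
    (Mch.image (fun p => p.image e)).image (fun p => p.image e.symm) = Mch := by
  rw [Finset.image_image]
  have : ((fun p : Finset κ => p.image e.symm) ∘ fun p : Finset ι => p.image e)
      = fun p => p := by
    funext p
    simp [Finset.image_image, Function.comp_def]
  rw [this]
  exact Finset.image_id

lemma hafnian_comp_equiv {κ : Type*} [Fintype κ] [DecidableEq κ] (e : ι ≃ κ)
    (C : Matrix κ κ ℝ) (hC : ∀ u v, C u v = C v u) :
    hafnian (fun x y => C (e x) (e y)) = hafnian C := by
  rw [hafnian_eq C]
  refine (hafnian_eq _).trans ?_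
  refine Finset.sum_nbij' (fun Mch => Mch.image (fun p => p.image e))
    (fun Mch => Mch.image (fun p => p.image e.symm)) ?_ ?_ ?_ ?_ ?_
  · intro Mch hMch
    simp only [Finset.mem_filter, Finset.mem_univ, true_and] at hMch ⊢
    exact hMch.image e
  · intro Mch hMch
    simp only [Finset.mem_filter, Finset.mem_univ, true_and] at hMch ⊢
    exact hMch.image e.symm
  · intro Mch _
    exact image_image_cancel e Mch
  · intro Mch _
    have := image_image_cancel e.symm Mch
    simpa using this
  · intro Mch hMch
    simp only [Finset.mem_filter, Finset.mem_univ, true_and] at hMch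
    rw [Finset.prod_image]
    · refine Finset.prod_congr rfl ?_
      intro p hp
      obtain ⟨a, b, hab, rfl⟩ := Finset.card_eq_two.1 (hMch.1 p hp)
      have : ({a, b} : Finset ι).image e = {e a, e b} := by simp
      rw [this, pairVal_pair hC (fun h => hab (e.injective h)),
        pairVal_pair (B := fun x y => C (e x) (e y)) (fun u v => hC (e u) (e v)) hab]
    · intro p hp q hq hpq
      have := congrArg (fun s : Finset κ => s.image e.symm) hpq
      simpa [Finset.image_image, Function.comp_def] using this

end Matching

section Forward

lemma rkron_symm {ι : Type*} {A : Matrix ι ι ℝ} (hA : A.IsSymm) (n : ι → ℕ) :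
    ∀ u v, rkron A n u v = rkron A n v u := by
  intro u v
  show A u.1 v.1 = A v.1 u.1
  rw [← hA.apply u.1 v.1]

lemma forward_dir {M : ℕ} (A₁ A₂ : Matrix (Fin M) (Fin M) ℝ) (hA₂symm : A₂.IsSymm)
    (σ : Equiv.Perm (Fin M)) (hσ : ∀ i j, A₁ i j = A₂ (σ i) (σ j)) (n : Fin M → ℕ) :
    ∑ τ : Equiv.Perm (Fin M), hafnian (rkron A₁ (n ∘ τ)) =
      ∑ τ : Equiv.Perm (Fin M), hafnian (rkron A₂ (n ∘ τ)) := by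
  have key : ∀ τ : Equiv.Perm (Fin M),
      hafnian (rkron A₁ (n ∘ τ)) = hafnian (rkron A₂ (n ∘ (σ.symm.trans τ))) := by
    intro τ
    set ρ := σ.symm.trans τ with hρ
    have hcast : ∀ i, (n ∘ τ) i = (n ∘ ρ) (σ i) := by
      intro i
      simp [hρ, Function.comp]
    let E : ((i : Fin M) × Fin ((n ∘ τ) i)) ≃ ((i : Fin M) × Fin ((n ∘ ρ) i)) :=
      (Equiv.sigmaCongrRight fun i => finCongr (hcast i)).trans
        (Equiv.sigmaCongrLeft (β := fun j => Fin ((n ∘ ⇑ρ) j)) σ)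
    have hE : ∀ x : (i : Fin M) × Fin ((n ∘ τ) i), (E x).1 = σ x.1 := by
      rintro ⟨i, a⟩
      rfl
    have : rkron A₁ (n ∘ τ) = fun x y => rkron A₂ (n ∘ ρ) (E x) (E y) := by
      funext x y
      show A₁ x.1 y.1 = A₂ (E x).1 (E y).1
      rw [hE, hE, hσ]
    rw [this, hafnian_comp_equiv E _ (rkron_symm hA₂symm _)]
  rw [Finset.sum_congr rfl (fun τ _ => key τ)]
  exact Fintype.sum_equiv (Equiv.mulRight σ.symm) _ _ (fun τ => rfl)

end Forward

section Core

open scoped Classical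

variable {ι : Type*} [Fintype ι] [DecidableEq ι]

noncomputable def degf {N : ℕ} (h : Fin N × Bool → ι) (i : ι) : ℕ :=
  (Finset.univ.filter (fun u => h u = i)).card

noncomputable def Wt (A : Matrix ι ι ℝ) {N : ℕ} (h : Fin N × Bool → ι) : ℝ :=
  ∏ k : Fin N, A (h (k, false)) (h (k, true))

/-- Equivalences `X ≃ Y` commuting with maps to a base `Z` correspond to families of
fiberwise equivalences. -/
def equivOver {X Y Z : Type*} (f₁ : X → Z) (f₂ : Y → Z) :
    {e : X ≃ Y // f₂ ∘ e = f₁} ≃ ((i : Z) → ({x // f₁ x = i} ≃ {y // f₂ y = i})) where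
  toFun := fun ⟨e, he⟩ i => e.subtypeEquiv (fun x => by
    rw [show f₂ (e x) = f₁ x from congrFun he x])
  invFun := fun fam => ⟨(Equiv.sigmaFiberEquiv f₁).symm.trans
      ((Equiv.sigmaCongrRight fam).trans (Equiv.sigmaFiberEquiv f₂)),
    by funext x; exact (fam (f₁ x) ⟨x, rfl⟩).2⟩
  left_inv := by
    rintro ⟨e, he⟩
    apply Subtype.ext
    apply Equiv.ext
    intro x
    rfl
  right_inv := by
    refine fun fam => funext fun i => Equiv.ext fun u => Subtype.ext ?_
    obtain ⟨x, hx⟩ := u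
    subst hx
    rfl

def sigmaFstFiber {m : ι → ℕ} (i : ι) : {t : (j : ι) × Fin (m j) // t.1 = i} ≃ Fin (m i) where
  toFun t := finCongr (congrArg m t.2) t.1.2
  invFun a := ⟨⟨i, a⟩, rfl⟩
  left_inv := by rintro ⟨⟨j, a⟩, h⟩; subst h; rfl
  right_inv := by intro a; rfl

lemma card_fiber_equiv_eq {N : ℕ} (m : ι → ℕ) (h : Fin N × Bool → ι) (hh : degf h = m) :
    (Finset.univ.filter
        (fun e : (Fin N × Bool) ≃ ((i : ι) × Fin (m i)) => Sigma.fst ∘ ⇑e = h)).card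
      = ∏ i, (m i).factorial := by
  rw [← Fintype.card_subtype]
  rw [Fintype.card_congr (equivOver h Sigma.fst), Fintype.card_pi]
  refine Finset.prod_congr rfl fun i _ => ?_
  have hc1 : Fintype.card {u : Fin N × Bool // h u = i} = m i := by
    rw [Fintype.card_subtype, ← hh]
    rfl
  have hc2 : Fintype.card {t : (j : ι) × Fin (m j) // t.1 = i} = m i := by
    rw [Fintype.card_congr (sigmaFstFiber i), Fintype.card_fin]
  rw [Fintype.card_equiv (Fintype.equivOfCardEq (hc1.trans hc2.symm)), hc1]

lemma degf_comp_equiv {N : ℕ} (m : ι → ℕ)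
    (e : (Fin N × Bool) ≃ ((i : ι) × Fin (m i))) :
    degf (Sigma.fst ∘ ⇑e) = m := by
  funext i
  show (Finset.univ.filter (fun u => (e u).1 = i)).card = m i
  rw [← Fintype.card_subtype]
  rw [Fintype.card_congr ((e.subtypeEquiv
      (q := fun t : (j : ι) × Fin (m j) => t.1 = i) (fun u => Iff.rfl)).trans
      (sigmaFstFiber i)), Fintype.card_fin]

lemma claim1 (A : Matrix ι ι ℝ) {N : ℕ} (m : ι → ℕ) :
    ∑ e : (Fin N × Bool) ≃ ((i : ι) × Fin (m i)), Wt A (Sigma.fst ∘ ⇑e)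
      = (∏ i, ((m i).factorial : ℝ)) *
        ∑ h ∈ Finset.univ.filter (fun h : Fin N × Bool → ι => degf h = m), Wt A h := by
  rw [← Finset.sum_fiberwise_of_maps_to
    (g := fun e : (Fin N × Bool) ≃ ((i : ι) × Fin (m i)) => Sigma.fst ∘ ⇑e)
    (t := Finset.univ.filter (fun h : Fin N × Bool → ι => degf h = m))
    (fun e _ => by simp [degf_comp_equiv m e])
    (fun e => Wt A (Sigma.fst ∘ ⇑e))]
  rw [Finset.mul_sum]
  refine Finset.sum_congr rfl fun h hh => ?_
  rw [Finset.mem_filter] at hh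
  calc ∑ e ∈ Finset.univ.filter
        (fun e : (Fin N × Bool) ≃ ((i : ι) × Fin (m i)) => Sigma.fst ∘ ⇑e = h),
        Wt A (Sigma.fst ∘ ⇑e)
      = ∑ _e ∈ Finset.univ.filter
        (fun e : (Fin N × Bool) ≃ ((i : ι) × Fin (m i)) => Sigma.fst ∘ ⇑e = h),
        Wt A h := by
        refine Finset.sum_congr rfl fun e he => ?_
        rw [Finset.mem_filter] at he
        rw [he.2]
    _ = (∏ i, ((m i).factorial : ℝ)) * Wt A h := by
        rw [Finset.sum_const, card_fiber_equiv_eq m h hh.2, nsmul_eq_mul]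
        push_cast
        ring

end Core

section Claim2

open scoped Classical

set_option linter.unusedSectionVars false

variable {ι : Type*} [Fintype ι] [DecidableEq ι]

lemma IsPM.disjoint {T : Type*} [Fintype T] [DecidableEq T] {Mch : Finset (Finset T)}
    (h : IsPM Mch) {p q : Finset T} (hp : p ∈ Mch) (hq : q ∈ Mch) (hpq : p ≠ q) :
    Disjoint p q := by
  rw [Finset.disjoint_left]
  intro x hxp hxq
  obtain ⟨r, _, hr⟩ := h.2 x
  exact hpq ((hr p ⟨hp, hxp⟩).trans (hr q ⟨hq, hxq⟩).symm)

variable {N : ℕ} {m : ι → ℕ}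

noncomputable def matchOf (e : (Fin N × Bool) ≃ ((i : ι) × Fin (m i))) :
    Finset (Finset ((i : ι) × Fin (m i))) :=
  Finset.univ.image (fun k : Fin N => ({e (k, false), e (k, true)} : Finset _))

lemma pairs_inj (e : (Fin N × Bool) ≃ ((i : ι) × Fin (m i))) {k k' : Fin N}
    (h : ({e (k, false), e (k, true)} : Finset _) = {e (k', false), e (k', true)}) :
    k = k' := by
  have : e (k, false) ∈ ({e (k', false), e (k', true)} : Finset _) := by
    rw [← h]; simp
  rcases Finset.mem_insert.1 this with h1 | h1
  · exact congrArg Prod.fst (e.injective h1)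
  · have h2 := e.injective (Finset.mem_singleton.1 h1)
    exact congrArg Prod.fst h2

lemma matchOf_isPM (e : (Fin N × Bool) ≃ ((i : ι) × Fin (m i))) : IsPM (matchOf e) := by
  constructor
  · intro p hp
    obtain ⟨k, _, rfl⟩ := Finset.mem_image.1 hp
    exact Finset.card_pair (fun h => by simpa using e.injective h)
  · intro t
    obtain ⟨⟨k, b⟩, hkb⟩ := e.surjective t
    refine ⟨{e (k, false), e (k, true)},
      ⟨Finset.mem_image_of_mem _ (Finset.mem_univ k), ?_⟩, ?_⟩
    · rw [← hkb]; cases b <;> simp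
    · rintro q ⟨hq, htq⟩
      obtain ⟨k', _, rfl⟩ := Finset.mem_image.1 hq
      rcases Finset.mem_insert.1 htq with h1 | h1
      · have h2 := e.injective (hkb.trans h1)
        have hk : k = k' := congrArg Prod.fst h2
        rw [← hk]
      · have h2 := e.injective (hkb.trans (Finset.mem_singleton.1 h1))
        have hk : k = k' := congrArg Prod.fst h2
        rw [← hk]

lemma if_bool_inj {α : Type*} {X Y : α} (hXY : X ≠ Y) {b b' c : Bool}
    (h : (if b = c then X else Y) = (if b' = c then X else Y)) : b = b' := by
  by_cases h1 : b = c <;> by_cases h2 : b' = c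
  · rw [h1, h2]
  · rw [if_pos h1, if_neg h2] at h; exact absurd h hXY
  · rw [if_neg h1, if_pos h2] at h; exact absurd h.symm hXY
  · cases b <;> cases b' <;> cases c <;> simp_all

lemma card_matchOf_fiber {Q : Finset (Finset ((i : ι) × Fin (m i)))}
    (hm : ∑ i, m i = 2 * N) (H : IsPM Q) :
    (Finset.univ.filter
      (fun e : (Fin N × Bool) ≃ ((i : ι) × Fin (m i)) => matchOf e = Q)).card
      = 2 ^ N * N.factorial := by
  classical
  have hT : Fintype.card ((i : ι) × Fin (m i)) = 2 * N := by
    simp [Fintype.card_sigma, hm]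
  have hU : Fintype.card (Fin N × Bool) = 2 * N := by
    simp [Fintype.card_prod]; ring
  have hsel : ∀ p ∈ Q, ∃ x y : (i : ι) × Fin (m i), x ≠ y ∧ p = {x, y} :=
    fun p hp => Finset.card_eq_two.1 (H.1 p hp)
  choose xsel ysel hxy hpair using hsel
  have hcardQ : Fintype.card {p // p ∈ Q} = N := by
    rw [Fintype.card_coe]
    have h2 := H.two_mul_card
    rw [hT] at h2; omega
  have key : ∀ (ρ : Fin N ≃ {p // p ∈ Q}) (s : Fin N → Bool),
      ∃ e : (Fin N × Bool) ≃ ((i : ι) × Fin (m i)),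
        ∀ k b, e (k, b) = if b = s k then xsel _ (ρ k).2 else ysel _ (ρ k).2 := by
    intro ρ s
    let f : Fin N × Bool → (i : ι) × Fin (m i) := fun u =>
      if u.2 = s u.1 then xsel _ (ρ u.1).2 else ysel _ (ρ u.1).2
    have hfp : ∀ u, f u ∈ ((ρ u.1 : {p // p ∈ Q}) : Finset ((i : ι) × Fin (m i))) := by
      intro u
      show (if u.2 = s u.1 then xsel _ (ρ u.1).2 else ysel _ (ρ u.1).2) ∈ _
      by_cases h : u.2 = s u.1
      · rw [if_pos h]
        exact (Finset.ext_iff.1 (hpair _ (ρ u.1).2) _).2 (by simp)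
      · rw [if_neg h]
        exact (Finset.ext_iff.1 (hpair _ (ρ u.1).2) _).2 (by simp)
    have hinj : Function.Injective f := by
      rintro ⟨k, b⟩ ⟨k', b'⟩ hf
      by_cases hk : k = k'
      · subst hk
        have hx := hxy _ (ρ k).2
        have hf' : (if b = s k then xsel _ (ρ k).2 else ysel _ (ρ k).2)
            = (if b' = s k then xsel _ (ρ k).2 else ysel _ (ρ k).2) := hf
        rw [if_bool_inj hx hf']
      · exfalso
        have hne : (ρ k).1 ≠ (ρ k').1 := by
          intro h; exact hk (ρ.injective (Subtype.ext h))
        have hdisj := H.disjoint (ρ k).2 (ρ k').2 hne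
        have h1 := hfp (k, b)
        have h2 := hfp (k', b')
        rw [hf] at h1
        exact Finset.disjoint_left.1 hdisj h1 h2
    have hbij : Function.Bijective f :=
      (Fintype.bijective_iff_injective_and_card f).2 ⟨hinj, by rw [hU, hT]⟩
    exact ⟨Equiv.ofBijective f hbij, fun k b => rfl⟩
  choose bld hbld using key
  -- the pair of `bld ρ s` at position k is `ρ k`
  have hpairof : ∀ (ρ : Fin N ≃ {p // p ∈ Q}) (s : Fin N → Bool) (k : Fin N),
      ({bld ρ s (k, false), bld ρ s (k, true)} : Finset _) = ((ρ k : {p // p ∈ Q}) : Finset _) := by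
    intro ρ s k
    rw [hbld ρ s k false, hbld ρ s k true]
    cases hsk : s k
    · rw [if_pos rfl, if_neg (by decide)]
      exact (hpair _ (ρ k).2).symm
    · rw [if_neg (by decide), if_pos rfl]
      rw [Finset.pair_comm]
      exact (hpair _ (ρ k).2).symm
  have hmatch : ∀ (ρ : Fin N ≃ {p // p ∈ Q}) (s : Fin N → Bool), matchOf (bld ρ s) = Q := by
    intro ρ s
    unfold matchOf
    ext q
    rw [Finset.mem_image]
    constructor
    · rintro ⟨k, _, rfl⟩
      rw [hpairof ρ s k]
      exact (ρ k).2
    · intro hq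
      refine ⟨ρ.symm ⟨q, hq⟩, Finset.mem_univ _, ?_⟩
      rw [hpairof ρ s (ρ.symm ⟨q, hq⟩), Equiv.apply_symm_apply]
  have hbij2 : (Finset.univ :
        Finset ((Fin N ≃ {p // p ∈ Q}) × (Fin N → Bool))).card
      = (Finset.univ.filter
        (fun e : (Fin N × Bool) ≃ ((i : ι) × Fin (m i)) => matchOf e = Q)).card := by
    refine Finset.card_bij (fun a _ => bld a.1 a.2) ?_ ?_ ?_
    · intro a _
      rw [Finset.mem_filter]
      exact ⟨Finset.mem_univ _, hmatch a.1 a.2⟩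
    · rintro ⟨ρ, s⟩ _ ⟨ρ', s'⟩ _ heq
      have heq' : bld ρ s = bld ρ' s' := heq
      have hval : ∀ k b, bld ρ s (k, b) = bld ρ' s' (k, b) := by
        intro k b; rw [heq']
      have hρ : ρ = ρ' := by
        apply Equiv.ext
        intro k
        apply Subtype.ext
        have h1 : ({bld ρ s (k, false), bld ρ s (k, true)} : Finset _)
            = ((ρ k : {p // p ∈ Q}) : Finset _) := hpairof ρ s k
        have h2 : ({bld ρ s (k, false), bld ρ s (k, true)} : Finset _)
            = ((ρ' k : {p // p ∈ Q}) : Finset _) := by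
          rw [hval k false, hval k true]; exact hpairof ρ' s' k
        rw [← h1, h2]
      subst hρ
      have hs : s = s' := by
        funext k
        by_contra hsk
        have h1 := hval k (s k)
        rw [hbld ρ s k (s k), hbld ρ s' k (s k), if_pos rfl,
          if_neg (fun h => hsk h)] at h1
        exact hxy _ (ρ k).2 h1
      rw [hs]
    · intro e he
      rw [Finset.mem_filter] at he
      have hQe := he.2
      have hmem : ∀ k : Fin N, ({e (k, false), e (k, true)} : Finset _) ∈ Q := by
        intro k
        rw [← hQe]
        exact Finset.mem_image_of_mem _ (Finset.mem_univ k)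
      let ρf : Fin N → {p // p ∈ Q} := fun k => ⟨_, hmem k⟩
      have hρinj : Function.Injective ρf := by
        intro k k' h
        exact pairs_inj e (congrArg Subtype.val h)
      have hρbij : Function.Bijective ρf :=
        (Fintype.bijective_iff_injective_and_card ρf).2
          ⟨hρinj, by rw [Fintype.card_fin, hcardQ]⟩
      let ρ : Fin N ≃ {p // p ∈ Q} := Equiv.ofBijective ρf hρbij
      have hρval : ∀ k, ((ρ k : {p // p ∈ Q}) : Finset _)
          = ({e (k, false), e (k, true)} : Finset _) := fun k => rfl
      have hff : ∀ k, e (k, false) = xsel _ (ρ k).2 ∨ e (k, false) = ysel _ (ρ k).2 := by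
        intro k
        have : e (k, false) ∈ ((ρ k : {p // p ∈ Q}) : Finset _) := by
          rw [hρval k]; simp
        rw [hpair _ (ρ k).2] at this
        rcases Finset.mem_insert.1 this with h | h
        · exact Or.inl h
        · exact Or.inr (Finset.mem_singleton.1 h)
      have htt : ∀ k, e (k, true) = xsel _ (ρ k).2 ∨ e (k, true) = ysel _ (ρ k).2 := by
        intro k
        have : e (k, true) ∈ ((ρ k : {p // p ∈ Q}) : Finset _) := by
          rw [hρval k]; simp
        rw [hpair _ (ρ k).2] at this
        rcases Finset.mem_insert.1 this with h | h
        · exact Or.inl h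
        · exact Or.inr (Finset.mem_singleton.1 h)
      have hne : ∀ k, e (k, false) ≠ e (k, true) := by
        intro k h
        have := e.injective h
        simpa using this
      let s : Fin N → Bool := fun k => if e (k, false) = xsel _ (ρ k).2 then false else true
      refine ⟨(ρ, s), Finset.mem_univ _, ?_⟩
      apply Equiv.ext
      rintro ⟨k, b⟩
      rw [hbld ρ s k b]
      by_cases hcase : e (k, false) = xsel _ (ρ k).2
      · have hsk : s k = false := by simp [s, hcase]
        have h2 : e (k, true) = ysel _ (ρ k).2 := by
          rcases htt k with h | h
          · exact absurd (hcase.trans h.symm) (hne k)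
          · exact h
        cases b
        · rw [if_pos (by rw [hsk]), ← hcase]
        · rw [if_neg (by rw [hsk]; exact fun h => Bool.noConfusion h), ← h2]
      · have h1 : e (k, false) = ysel _ (ρ k).2 := (hff k).resolve_left hcase
        have h2 : e (k, true) = xsel _ (ρ k).2 := by
          rcases htt k with h | h
          · exact h
          · exact absurd (h1.trans h.symm) (hne k)
        have hsk : s k = true := by simp [s, hcase]
        cases b
        · rw [if_neg (by rw [hsk]; exact fun h => Bool.noConfusion h), ← h1]
        · rw [if_pos (by rw [hsk]), ← h2]
  rw [← hbij2, Finset.card_univ, Fintype.card_prod, Fintype.card_fun,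
    Fintype.card_equiv (Fintype.equivOfCardEq (by rw [Fintype.card_fin, hcardQ] :
      Fintype.card (Fin N) = Fintype.card {p // p ∈ Q})),
    Fintype.card_fin, Fintype.card_bool]
  ring

end Claim2

section CoreId

open scoped Classical

set_option linter.unusedSectionVars false

variable {ι : Type*} [Fintype ι] [DecidableEq ι]

lemma claim2 (A : Matrix ι ι ℝ) (hA : ∀ u v, A u v = A v u) {N : ℕ} {m : ι → ℕ}
    (hm : ∑ i, m i = 2 * N) :
    ∑ e : (Fin N × Bool) ≃ ((i : ι) × Fin (m i)), Wt A (Sigma.fst ∘ ⇑e)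
      = 2 ^ N * (N.factorial : ℝ) * hafnian (rkron A m) := by
  have hBsymm : ∀ u v, rkron A m u v = rkron A m v u := fun u v => hA u.1 v.1
  rw [hafnian_eq]
  rw [← Finset.sum_fiberwise_of_maps_to
    (g := fun e : (Fin N × Bool) ≃ ((i : ι) × Fin (m i)) => matchOf e)
    (t := Finset.univ.filter (fun Mch : Finset (Finset ((i : ι) × Fin (m i))) => IsPM Mch))
    (fun e _ => by simp [matchOf_isPM e])
    (fun e => Wt A (Sigma.fst ∘ ⇑e))]
  rw [Finset.mul_sum]
  refine Finset.sum_congr rfl fun Mch hMch => ?_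
  rw [Finset.mem_filter] at hMch
  have hW : ∀ e : (Fin N × Bool) ≃ ((i : ι) × Fin (m i)), matchOf e = Mch →
      Wt A (Sigma.fst ∘ ⇑e) = ∏ p ∈ Mch, pairVal (rkron A m) p := by
    intro e he
    have h1 : Wt A (Sigma.fst ∘ ⇑e)
        = ∏ k : Fin N, pairVal (rkron A m) {e (k, false), e (k, true)} := by
      unfold Wt
      refine Finset.prod_congr rfl fun k _ => ?_
      rw [pairVal_pair hBsymm (fun h => by simpa using e.injective h)]
      rfl
    rw [h1, ← he]
    unfold matchOf
    rw [Finset.prod_image]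
    intro k _ k' _ h
    exact pairs_inj e h
  calc ∑ e ∈ Finset.univ.filter
        (fun e : (Fin N × Bool) ≃ ((i : ι) × Fin (m i)) => matchOf e = Mch),
        Wt A (Sigma.fst ∘ ⇑e)
      = ∑ e ∈ Finset.univ.filter
        (fun e : (Fin N × Bool) ≃ ((i : ι) × Fin (m i)) => matchOf e = Mch),
        ∏ p ∈ Mch, pairVal (rkron A m) p := by
        refine Finset.sum_congr rfl fun e he => ?_
        rw [Finset.mem_filter] at he
        exact hW e he.2
    _ = 2 ^ N * (N.factorial : ℝ) * ∏ p ∈ Mch, pairVal (rkron A m) p := by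
        rw [Finset.sum_const, card_matchOf_fiber hm hMch.2, nsmul_eq_mul]
        push_cast
        ring

/-- The per-degree core counting identity. -/
lemma core_count (A : Matrix ι ι ℝ) (hA : ∀ u v, A u v = A v u) {N : ℕ} {m : ι → ℕ}
    (hm : ∑ i, m i = 2 * N) :
    ∑ h ∈ Finset.univ.filter (fun h : Fin N × Bool → ι => degf h = m), Wt A h
      = 2 ^ N * (N.factorial : ℝ) / (∏ i, ((m i).factorial : ℝ)) * hafnian (rkron A m) := by
  have hfac : (∏ i, ((m i).factorial : ℝ)) ≠ 0 :=
    Finset.prod_ne_zero_iff.2 fun i _ => Nat.cast_ne_zero.2 (Nat.factorial_ne_zero _)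
  have h1 := claim1 A (N := N) m
  rw [claim2 A hA hm] at h1
  field_simp at h1 ⊢
  rw [h1]

end CoreId

section Master

open scoped Classical

set_option linter.unusedSectionVars false

variable {ι : Type*} [Fintype ι] [DecidableEq ι]

noncomputable def QF (A : Matrix ι ι ℝ) (x : ι → ℝ) : ℝ :=
  ∑ i, ∑ j, A i j * x i * x j

noncomputable def MsN (ι : Type*) [Fintype ι] [DecidableEq ι] (N : ℕ) : Finset (ι → ℕ) :=
  (Fintype.piFinset fun _ : ι => Finset.range (2 * N + 1)).filter
    (fun m => ∑ i, m i = 2 * N)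

def pairEquiv (ι : Type*) (N : ℕ) : ((Fin N × Bool) → ι) ≃ (Fin N → ι × ι) where
  toFun h := fun k => (h (k, false), h (k, true))
  invFun f := fun u => if u.2 then (f u.1).2 else (f u.1).1
  left_inv := by
    intro h
    funext u
    rcases u with ⟨k, b⟩
    cases b <;> rfl
  right_inv := by
    intro f
    funext k
    rfl

lemma prod_pow_degf {N : ℕ} (x : ι → ℝ) (h : (Fin N × Bool) → ι) :
    ∏ u : Fin N × Bool, x (h u) = ∏ i, x i ^ degf h i := by
  unfold degf
  rw [Finset.prod_comp (s := Finset.univ) x h]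
  refine Finset.prod_subset (Finset.subset_univ _) ?_
  intro i _ hi
  have hz : (Finset.univ.filter fun u => h u = i).card = 0 := by
    rw [Finset.card_eq_zero, Finset.filter_eq_empty_iff]
    intro u _ hui
    exact hi (hui ▸ Finset.mem_image_of_mem h (Finset.mem_univ u))
  rw [hz, pow_zero]

lemma expand_pow (A : Matrix ι ι ℝ) (x : ι → ℝ) (N : ℕ) :
    (QF A x) ^ N = ∑ h : (Fin N × Bool) → ι, Wt A h * ∏ i, x i ^ degf h i := by
  have h1 : QF A x = ∑ p : ι × ι, A p.1 p.2 * x p.1 * x p.2 := by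
    rw [QF, Fintype.sum_prod_type]
  rw [h1, Fintype.sum_pow]
  rw [← Equiv.sum_comp (pairEquiv ι N)
    (fun f => ∏ k : Fin N, A (f k).1 (f k).2 * x (f k).1 * x (f k).2)]
  refine Finset.sum_congr rfl fun h _ => ?_
  have h2 : ∏ k : Fin N, A ((pairEquiv ι N h) k).1 ((pairEquiv ι N h) k).2
        * x ((pairEquiv ι N h) k).1 * x ((pairEquiv ι N h) k).2
      = ∏ k : Fin N, A (h (k, false)) (h (k, true)) * x (h (k, false)) * x (h (k, true)) :=
    rfl
  rw [h2]
  have h3 : ∏ k : Fin N, A (h (k, false)) (h (k, true)) * x (h (k, false)) * x (h (k, true))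
      = (∏ k : Fin N, A (h (k, false)) (h (k, true)))
        * ∏ k : Fin N, x (h (k, false)) * x (h (k, true)) := by
    rw [← Finset.prod_mul_distrib]
    refine Finset.prod_congr rfl fun k _ => by ring
  rw [h3]
  have h4 : ∏ k : Fin N, x (h (k, false)) * x (h (k, true))
      = ∏ u : Fin N × Bool, x (h u) := by
    rw [Fintype.prod_prod_type]
    refine Finset.prod_congr rfl fun k _ => ?_
    rw [Fintype.prod_bool]
    ring
  rw [h4, prod_pow_degf x h]
  rfl

lemma master (A : Matrix ι ι ℝ) (hA : ∀ u v, A u v = A v u) (x : ι → ℝ) (N : ℕ) :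
    (QF A x) ^ N = ∑ m ∈ MsN ι N,
      (2 ^ N * (N.factorial : ℝ) / (∏ i, ((m i).factorial : ℝ)))
        * hafnian (rkron A m) * ∏ i, x i ^ m i := by
  rw [expand_pow A x N]
  have hmaps : ∀ h : (Fin N × Bool) → ι, degf h ∈ MsN ι N := by
    intro h
    rw [MsN, Finset.mem_filter]
    constructor
    · rw [Fintype.mem_piFinset]
      intro i
      rw [Finset.mem_range]
      have : degf h i ≤ Fintype.card (Fin N × Bool) := by
        unfold degf
        exact (Finset.card_filter_le _ _).trans (le_of_eq (Finset.card_univ))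
      simp [Fintype.card_prod] at this
      omega
    · have := Finset.card_eq_sum_card_fiberwise
        (f := h) (s := Finset.univ) (t := Finset.univ) (fun u _ => Finset.mem_univ (h u))
      rw [Finset.card_univ] at this
      simp [Fintype.card_prod] at this
      unfold degf
      omega
  rw [← Finset.sum_fiberwise_of_maps_to (g := degf) (fun h _ => hmaps h)
    (fun h => Wt A h * ∏ i, x i ^ degf h i)]
  refine Finset.sum_congr rfl fun m hm => ?_
  rw [MsN, Finset.mem_filter] at hm
  calc ∑ h ∈ Finset.univ.filter (fun h : (Fin N × Bool) → ι => degf h = m),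
        Wt A h * ∏ i, x i ^ degf h i
      = ∑ h ∈ Finset.univ.filter (fun h : (Fin N × Bool) → ι => degf h = m),
        Wt A h * ∏ i, x i ^ m i := by
        refine Finset.sum_congr rfl fun h hh => ?_
        rw [Finset.mem_filter] at hh
        rw [hh.2]
    _ = (∑ h ∈ Finset.univ.filter (fun h : (Fin N × Bool) → ι => degf h = m),
        Wt A h) * ∏ i, x i ^ m i := by rw [Finset.sum_mul]
    _ = _ := by rw [core_count A hA hm.2]

end Master

section PowSum

open scoped Classical

set_option linter.unusedSectionVars false

variable {ι : Type*} [Fintype ι] [DecidableEq ι]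

lemma MsN_comp {N : ℕ} {m : ι → ℕ} (σ : Equiv.Perm ι) (hm : m ∈ MsN ι N) :
    m ∘ ⇑σ ∈ MsN ι N := by
  rw [MsN, Finset.mem_filter, Fintype.mem_piFinset] at hm ⊢
  refine ⟨fun i => hm.1 (σ i), ?_⟩
  rw [← hm.2]
  exact Equiv.sum_comp σ m

lemma powsum_eq {M : ℕ} (A₁ A₂ : Matrix (Fin M) (Fin M) ℝ)
    (h₁ : ∀ u v, A₁ u v = A₁ v u) (h₂ : ∀ u v, A₂ u v = A₂ v u)
    (hyp : ∀ n : Fin M → ℕ,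
      ∑ σ : Equiv.Perm (Fin M), hafnian (rkron A₁ (n ∘ σ)) =
        ∑ σ : Equiv.Perm (Fin M), hafnian (rkron A₂ (n ∘ σ)))
    (x : Fin M → ℝ) (N : ℕ) :
    ∑ σ : Equiv.Perm (Fin M), (QF A₁ (x ∘ σ)) ^ N =
      ∑ σ : Equiv.Perm (Fin M), (QF A₂ (x ∘ σ)) ^ N := by
  have key : ∀ A : Matrix (Fin M) (Fin M) ℝ, (∀ u v, A u v = A v u) →
      ∑ σ : Equiv.Perm (Fin M), (QF A (x ∘ σ)) ^ N
        = ∑ n ∈ MsN (Fin M) N,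
            (2 ^ N * (N.factorial : ℝ) / (∏ i, ((n i).factorial : ℝ)))
              * (∏ i, x i ^ n i)
              * ∑ σ : Equiv.Perm (Fin M), hafnian (rkron A (n ∘ σ)) := by
    intro A hA
    have hper : ∀ σ : Equiv.Perm (Fin M), (QF A (x ∘ σ)) ^ N
        = ∑ n ∈ MsN (Fin M) N,
            (2 ^ N * (N.factorial : ℝ) / (∏ i, ((n i).factorial : ℝ)))
              * hafnian (rkron A (n ∘ σ)) * ∏ i, x i ^ n i := by
      intro σ
      rw [master A hA (x ∘ σ) N]
      refine Finset.sum_nbij' (i := fun m => m ∘ ⇑σ.symm) (j := fun n => n ∘ ⇑σ)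
        (fun m hm => MsN_comp σ.symm hm) (fun n hn => MsN_comp σ hn) ?_ ?_ ?_
      · intro m _
        funext i
        simp
      · intro n _
        funext i
        simp
      · intro m hm
        have e1 : (∏ i, (((m ∘ ⇑σ.symm) i).factorial : ℝ)) = ∏ i, ((m i).factorial : ℝ) := by
          exact Equiv.prod_comp σ.symm (fun i => ((m i).factorial : ℝ))
        have e2 : ((m ∘ ⇑σ.symm) ∘ ⇑σ) = m := by
          funext i; simp
        have e3 : (∏ i, x i ^ (m ∘ ⇑σ.symm) i) = ∏ i, (x ∘ ⇑σ) i ^ m i := by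
          rw [← Equiv.prod_comp σ (fun i => x i ^ (m ∘ ⇑σ.symm) i)]
          refine Finset.prod_congr rfl fun i _ => ?_
          simp
        rw [e1, e2, e3]
    rw [Finset.sum_congr rfl (fun σ _ => hper σ), Finset.sum_comm]
    refine Finset.sum_congr rfl fun n _ => ?_
    rw [Finset.mul_sum]
    refine Finset.sum_congr rfl fun σ _ => by ring
  rw [key A₁ h₁, key A₂ h₂]
  exact Finset.sum_congr rfl fun n _ => by rw [hyp n]

end PowSum

section Vandermonde

open scoped Classical

lemma multiset_eq_of_powsums (s t : Multiset ℝ)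
    (h : ∀ N : ℕ, ((s.map (· ^ N)).sum : ℝ) = (t.map (· ^ N)).sum) : s = t := by
  classical
  set u := (s + t).toFinset with hu
  set k := u.card with hk
  have e : {x // x ∈ u} ≃ Fin k := Fintype.equivFinOfCardEq (by rw [Fintype.card_coe])
  set v : Fin k → ℝ := fun i => (e.symm i : ℝ) with hv
  have hvinj : Function.Injective v := by
    intro i j hij
    have := e.symm.injective (Subtype.ext hij)
    exact this
  set d : Fin k → ℝ := fun i => (s.count (v i) : ℝ) - (t.count (v i) : ℝ) with hd
  have hext : ∀ (w : Multiset ℝ), w ≤ s + t →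
      ∀ N : ℕ, ((w.map (· ^ N)).sum : ℝ) = ∑ c ∈ u, (w.count c : ℝ) * c ^ N := by
    intro w hw N
    rw [Finset.sum_multiset_map_count]
    rw [Finset.sum_subset (Multiset.toFinset_subset.2 (Multiset.subset_of_le hw))]
    · refine Finset.sum_congr rfl fun c _ => ?_
      rw [nsmul_eq_mul]
    · intro c _ hc
      rw [Multiset.count_eq_zero_of_notMem (fun hmem => hc (Multiset.mem_toFinset.2 hmem))]
      simp
  have hsum : ∀ N : ℕ, ∑ i, d i * v i ^ N = 0 := by
    intro N
    have h1 := hext s (Multiset.le_add_right s t) N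
    have h2 := hext t (Multiset.le_add_left t s) N
    have h3 : ∑ c ∈ u, ((s.count c : ℝ) - (t.count c : ℝ)) * c ^ N = 0 := by
      have heq := h N
      rw [h1, h2] at heq
      have hsplit : ∑ c ∈ u, ((s.count c : ℝ) - (t.count c : ℝ)) * c ^ N
          = (∑ c ∈ u, (s.count c : ℝ) * c ^ N) - ∑ c ∈ u, (t.count c : ℝ) * c ^ N := by
        rw [← Finset.sum_sub_distrib]
        exact Finset.sum_congr rfl fun c _ => by ring
      rw [hsplit, heq, sub_self]
    calc ∑ i, d i * v i ^ N
        = ∑ c : {x // x ∈ u}, ((s.count (c : ℝ) : ℝ) - (t.count (c : ℝ) : ℝ)) * (c : ℝ) ^ N := by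
          rw [← Equiv.sum_comp e.symm
            (fun c : {x // x ∈ u} => ((s.count (c : ℝ) : ℝ) - (t.count (c : ℝ) : ℝ)) * (c : ℝ) ^ N)]
      _ = ∑ c ∈ u, ((s.count c : ℝ) - (t.count c : ℝ)) * c ^ N := by
          rw [← Finset.sum_coe_sort u
            (fun c => ((s.count c : ℝ) - (t.count c : ℝ)) * c ^ N)]
      _ = 0 := h3
  have hd0 : d = 0 := by
    set W : Matrix (Fin k) (Fin k) ℝ := (Matrix.vandermonde v).transpose with hW
    have hWv : W.mulVec d = 0 := by
      funext N
      show ∑ i, W N i * d i = 0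
      rw [← hsum (N : ℕ)]
      refine Finset.sum_congr rfl fun i _ => ?_
      have hWe : W N i = v i ^ (N : ℕ) := by
        show (Matrix.vandermonde v) i N = _
        rw [Matrix.vandermonde_apply]
      rw [hWe]
      ring
    have hdet : IsUnit W.det := by
      rw [hW, Matrix.det_transpose, Matrix.det_vandermonde]
      refine (Finset.prod_ne_zero_iff.2 fun i _ => Finset.prod_ne_zero_iff.2 fun j hj => ?_).isUnit
      rw [sub_ne_zero]
      intro hvij
      have hji : j = i := hvinj hvij
      rw [hji] at hj
      exact absurd (Finset.mem_Ioi.1 hj) (lt_irrefl i)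
    calc d = (W⁻¹ * W).mulVec d := by
          rw [Matrix.nonsing_inv_mul _ hdet, Matrix.one_mulVec]
      _ = W⁻¹.mulVec (W.mulVec d) := (Matrix.mulVec_mulVec ..).symm
      _ = 0 := by rw [hWv, Matrix.mulVec_zero]
  have hcount : ∀ c : ℝ, s.count c = t.count c := by
    intro c
    by_cases hc : c ∈ u
    · have hvc : v (e ⟨c, hc⟩) = c := by
        show ((e.symm (e ⟨c, hc⟩) : {x // x ∈ u}) : ℝ) = c
        rw [Equiv.symm_apply_apply]
      have hz : d (e ⟨c, hc⟩) = 0 := by rw [hd0]; rfl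
      have h0 : (s.count (v (e ⟨c, hc⟩)) : ℝ) - (t.count (v (e ⟨c, hc⟩)) : ℝ) = 0 := hz
      rw [hvc] at h0
      have : (s.count c : ℝ) = (t.count c : ℝ) := by linarith
      exact_mod_cast this
    · have hs0 : s.count c = 0 := by
        rw [Multiset.count_eq_zero]
        intro hmem
        exact hc (Multiset.mem_toFinset.2 (Multiset.mem_add.2 (Or.inl hmem)))
      have ht0 : t.count c = 0 := by
        rw [Multiset.count_eq_zero]
        intro hmem
        exact hc (Multiset.mem_toFinset.2 (Multiset.mem_add.2 (Or.inr hmem)))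
      rw [hs0, ht0]
  exact Multiset.ext.2 hcount

end Vandermonde

section Final

open scoped Classical

lemma QF_eval_poly {M : ℕ} (A₁ A₂ : Matrix (Fin M) (Fin M) ℝ) (τ : Equiv.Perm (Fin M))
    (y : Fin M → ℝ) :
    MvPolynomial.eval y
        ((∑ i, ∑ j, (MvPolynomial.C (A₁ i j) * MvPolynomial.X i * MvPolynomial.X j))
          - ∑ i, ∑ j, (MvPolynomial.C (A₂ i j) * MvPolynomial.X (τ i) * MvPolynomial.X (τ j)))
      = QF A₁ y - QF A₂ (y ∘ τ) := by
  simp [QF, Function.comp]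

lemma exists_generic {M : ℕ} (A₁ A₂ : Matrix (Fin M) (Fin M) ℝ) :
    ∃ x : Fin M → ℝ, ∀ τ : Equiv.Perm (Fin M),
      QF A₁ x = QF A₂ (x ∘ τ) → ∀ y, QF A₁ y = QF A₂ (y ∘ τ) := by
  classical
  set P : Equiv.Perm (Fin M) → MvPolynomial (Fin M) ℝ := fun τ =>
    (∑ i, ∑ j, (MvPolynomial.C (A₁ i j) * MvPolynomial.X i * MvPolynomial.X j))
      - ∑ i, ∑ j, (MvPolynomial.C (A₂ i j) * MvPolynomial.X (τ i) * MvPolynomial.X (τ j))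
    with hP
  have heval : ∀ τ y, MvPolynomial.eval y (P τ) = QF A₁ y - QF A₂ (y ∘ τ) :=
    fun τ y => QF_eval_poly A₁ A₂ τ y
  set F := Finset.univ.filter (fun τ : Equiv.Perm (Fin M) => P τ ≠ 0) with hF
  have hprod : (∏ τ ∈ F, P τ) ≠ 0 := by
    rw [Finset.prod_ne_zero_iff]
    intro τ hτ
    exact (Finset.mem_filter.1 hτ).2
  have hex : ∃ x : Fin M → ℝ, MvPolynomial.eval x (∏ τ ∈ F, P τ) ≠ 0 := by
    by_contra hcon
    push_neg at hcon
    exact hprod (MvPolynomial.funext fun x => by rw [hcon x, map_zero])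
  obtain ⟨x, hx⟩ := hex
  refine ⟨x, fun τ hτeq y => ?_⟩
  have hPτ : P τ = 0 := by
    by_contra hne
    have hmem : τ ∈ F := Finset.mem_filter.2 ⟨Finset.mem_univ _, hne⟩
    have hnz : MvPolynomial.eval x (P τ) ≠ 0 := by
      intro h0
      apply hx
      rw [map_prod]
      exact Finset.prod_eq_zero hmem h0
    apply hnz
    rw [heval, hτeq, sub_self]
  have hfin := heval τ y
  rw [hPτ, map_zero] at hfin
  linarith

lemma sum_mul_ind {ι : Type*} [Fintype ι] [DecidableEq ι] (f : ι → ℝ) (k l : ι) :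
    ∑ j, f j * ((if j = k then (1:ℝ) else 0) + (if j = l then 1 else 0)) = f k + f l := by
  simp [mul_add, mul_ite, mul_one, mul_zero, Finset.sum_add_distrib, Finset.sum_ite_eq']

lemma QF_pair {ι : Type*} [Fintype ι] [DecidableEq ι] (B : Matrix ι ι ℝ) (k l : ι) :
    QF B (fun r => (if r = k then (1:ℝ) else 0) + (if r = l then 1 else 0))
      = B k k + B k l + B l k + B l l := by
  unfold QF
  have h1 : ∀ i : ι,
      ∑ j, B i j * ((if i = k then (1:ℝ) else 0) + (if i = l then 1 else 0))
        * ((if j = k then (1:ℝ) else 0) + (if j = l then 1 else 0))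
      = (fun i => (B i k + B i l)) i
          * ((if i = k then (1:ℝ) else 0) + (if i = l then 1 else 0)) := by
    intro i
    have := sum_mul_ind (fun j => B i j * ((if i = k then (1:ℝ) else 0)
      + (if i = l then 1 else 0))) k l
    rw [this]
    ring
  rw [Finset.sum_congr rfl fun i _ => h1 i]
  rw [sum_mul_ind (fun i => B i k + B i l) k l]
  ring

end Final

theorem stmt_13 (M : ℕ) (hM : Even M) (A₁ A₂ : Matrix (Fin M) (Fin M) ℝ)
    (hA₁symm : A₁.IsSymm) (hA₁diag : ∀ i, A₁ i i = 0)
    (hA₁01 : ∀ i j, A₁ i j = 0 ∨ A₁ i j = 1)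
    (hA₂symm : A₂.IsSymm) (hA₂diag : ∀ i, A₂ i i = 0)
    (hA₂01 : ∀ i j, A₂ i j = 0 ∨ A₂ i j = 1)
    (hspec : A₁.charpoly = A₂.charpoly) :
    (∃ σ : Equiv.Perm (Fin M), ∀ i j, A₁ i j = A₂ (σ i) (σ j)) ↔
      ∀ n : Fin M → ℕ,
        ∑ σ : Equiv.Perm (Fin M), hafnian (rkron A₁ (n ∘ σ)) =
          ∑ σ : Equiv.Perm (Fin M), hafnian (rkron A₂ (n ∘ σ)) := by
  classical
  have h₁ : ∀ u v, A₁ u v = A₁ v u := fun u v => by rw [← hA₁symm.apply u v]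
  have h₂ : ∀ u v, A₂ u v = A₂ v u := fun u v => by rw [← hA₂symm.apply u v]
  constructor
  · rintro ⟨σ, hσ⟩ n
    exact forward_dir A₁ A₂ hA₂symm σ hσ n
  · intro hyp
    obtain ⟨x, hx⟩ := exists_generic A₁ A₂
    have hps := powsum_eq A₁ A₂ h₁ h₂ hyp x
    have hmeq : Multiset.map (fun σ : Equiv.Perm (Fin M) => QF A₁ (x ∘ σ)) Finset.univ.val
        = Multiset.map (fun σ : Equiv.Perm (Fin M) => QF A₂ (x ∘ σ)) Finset.univ.val := by
      apply multiset_eq_of_powsums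
      intro N
      rw [Multiset.map_map, Multiset.map_map]
      exact hps N
    have hone : x ∘ ⇑(1 : Equiv.Perm (Fin M)) = x := by
      funext r; rfl
    have hmem1 : QF A₁ x ∈ Multiset.map
        (fun σ : Equiv.Perm (Fin M) => QF A₁ (x ∘ σ)) Finset.univ.val := by
      refine Multiset.mem_map.2 ⟨1, ?_, ?_⟩
      · exact Finset.mem_univ_val _
      · rw [hone]
    rw [hmeq] at hmem1
    obtain ⟨τ, _, hτ⟩ := Multiset.mem_map.1 hmem1
    have hall := hx τ hτ.symm
    refine ⟨τ.symm, fun i j => ?_⟩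
    by_cases hij : i = j
    · rw [hij, hA₁diag, hA₂diag]
    · have hy := hall (fun r => (if r = i then (1:ℝ) else 0) + (if r = j then 1 else 0))
      rw [QF_pair A₁ i j] at hy
      have hcomp : ((fun r => (if r = i then (1:ℝ) else 0) + (if r = j then 1 else 0)) ∘ ⇑τ)
          = (fun r => (if r = τ.symm i then (1:ℝ) else 0)
              + (if r = τ.symm j then 1 else 0)) := by
        funext r
        simp [Function.comp, Equiv.apply_eq_iff_eq_symm_apply]
      rw [hcomp, QF_pair A₂ (τ.symm i) (τ.symm j)] at hy
      rw [hA₁diag i, hA₁diag j, hA₂diag (τ.symm i), hA₂diag (τ.symm j),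
        h₁ j i, h₂ (τ.symm j) (τ.symm i)] at hy
      linarith
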